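/- arXiv:1411.4998 — 4 statements merged into one kernel-verified Lean document; each statement's English description precedes it below -/
import Mathlib

section
/- Let p be an odd prime, ζ a fixed primitive p-th root of unity in an algebraic closure Q̄ of ℚ, K = ℚ(ζ), and L ⊆ Q̄ the splitting field over K of f_p(x) = 1 − (1 − x^p)^p. Then L = L₂, where L₂ is the field obtained from K by adjoining, for each 1 ≤ i ≤ (p−1)/2, a p-th root of 1 − ζ^i, together with a p-th root of p. -/
/-- Let `p` be an odd prime, `ζ` a primitive `p`-th root of unity in `Q̄ = AlgebraicClosure ℚ`,
`K = ℚ(ζ)`, and `L ⊆ Q̄` the splitting field over `K` of `f_p(x) = 1 - (1 - x^p)^p`.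
Then `L = L₂`, where `L₂` is obtained from `K` by adjoining, for each `1 ≤ i ≤ (p-1)/2`,
a `p`-th root `α i` of `1 - ζ^i`, together with a `p`-th root `β` of `p`. -/
theorem stmt_2 (p : ℕ) (hp : p.Prime) (hodd : Odd p)
    (ζ : AlgebraicClosure ℚ) (hζ : IsPrimitiveRoot ζ p)
    (K : IntermediateField ℚ (AlgebraicClosure ℚ))
    (hK : K = IntermediateField.adjoin ℚ {ζ})
    (L : IntermediateField K (AlgebraicClosure ℚ))
    (hL : L = IntermediateField.adjoin K
      {x : AlgebraicClosure ℚ | 1 - (1 - x ^ p) ^ p = 0})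
    (α : ℕ → AlgebraicClosure ℚ)
    (hα : ∀ i : ℕ, 1 ≤ i → i ≤ (p - 1) / 2 → (α i) ^ p = 1 - ζ ^ i)
    (β : AlgebraicClosure ℚ) (hβ : β ^ p = (p : AlgebraicClosure ℚ)) :
    L = IntermediateField.adjoin K
      ((α '' {i : ℕ | 1 ≤ i ∧ i ≤ (p - 1) / 2}) ∪ {β}) := by
  classical
  haveI : Fact p.Prime := ⟨hp⟩
  haveI : NeZero p := ⟨hp.ne_zero⟩
  obtain ⟨m, hm⟩ := hodd
  have hodd' : Odd p := ⟨m, hm⟩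
  have hp2 : p ≠ 2 := by rintro rfl; omega
  have hm1 : 1 ≤ m := by have := hp.two_le; omega
  have hm2 : (p - 1) / 2 = m := by omega
  have hppos : 0 < p := hp.pos
  have hζp : ζ ^ p = 1 := hζ.pow_eq_one
  have hζ0 : ζ ≠ 0 := by
    intro h
    rw [h, zero_pow hp.ne_zero] at hζp
    exact zero_ne_one hζp
  have hsub0 : ∀ j : ℕ, 1 ≤ j → j < p → (1 : AlgebraicClosure ℚ) - ζ ^ j ≠ 0 := by
    intro j h1 h2
    exact sub_ne_zero.mpr (Ne.symm (hζ.pow_ne_one_of_pos_of_lt (by omega) h2))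
  have hζK : ζ ∈ K := by
    rw [hK]; exact IntermediateField.subset_adjoin ℚ {ζ} rfl
  have hζmem : ∀ N : IntermediateField K (AlgebraicClosure ℚ), ζ ∈ N := by
    intro N
    have h := N.algebraMap_mem ⟨ζ, hζK⟩
    simpa using h
  -- key lemma: if y ∈ N, y ≠ 0, and x^p = y^p, then x ∈ N
  have key : ∀ (N : IntermediateField K (AlgebraicClosure ℚ)) (y : AlgebraicClosure ℚ), y ∈ N → y ≠ 0 →
      ∀ x : AlgebraicClosure ℚ, x ^ p = y ^ p → x ∈ N := by
    intro N y hyN hy0 x hxy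
    have h1 : (x / y) ^ p = 1 := by
      rw [div_pow, hxy, div_self (pow_ne_zero _ hy0)]
    obtain ⟨k, -, hk⟩ := hζ.eq_pow_of_pow_eq_one h1
    have hx : ζ ^ k * y = x := (eq_div_iff hy0).mp hk
    rw [← hx]
    exact mul_mem (pow_mem (hζmem N) k) hyN
  set M := IntermediateField.adjoin K
      ((α '' {i : ℕ | 1 ≤ i ∧ i ≤ (p - 1) / 2}) ∪ {β}) with hM
  have hαM : ∀ i : ℕ, 1 ≤ i → i ≤ m → α i ∈ M :=
    fun i h1 h2 => IntermediateField.subset_adjoin K _ (Or.inl ⟨i, ⟨h1, by omega⟩, rfl⟩)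
  have hβM : β ∈ M := IntermediateField.subset_adjoin K _ (Or.inr rfl)
  have hαp : ∀ i : ℕ, 1 ≤ i → i ≤ m → (α i) ^ p = 1 - ζ ^ i :=
    fun i h1 h2 => hα i h1 (by omega)
  have hα0 : ∀ i : ℕ, 1 ≤ i → i ≤ m → α i ≠ 0 := by
    intro i h1 h2 h
    apply hsub0 i h1 (by omega)
    rw [← hαp i h1 h2, h]
    exact zero_pow hp.ne_zero
  -- the full product formula
  have hprod : ∏ k ∈ Finset.range (p - 1), ((1 : AlgebraicClosure ℚ) - ζ ^ (k + 1)) = (p : AlgebraicClosure ℚ) := by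
    have hζ' : IsPrimitiveRoot ζ ((p - 1) + 1) := by
      rwa [Nat.sub_add_cancel hp.one_le]
    have h := hζ'.prod_one_sub_pow_eq_order
    rw [h]
    have : ((p - 1 : ℕ) : AlgebraicClosure ℚ) = (p : AlgebraicClosure ℚ) - 1 := by
      push_cast [Nat.cast_sub hp.one_le]; ring
    rw [this]; ring
  set P : AlgebraicClosure ℚ := ∏ k ∈ Finset.range m, ((1 : AlgebraicClosure ℚ) - ζ ^ (k + 1)) with hPdef
  set S : ℕ := ∑ k ∈ Finset.range m, (p - (k + 1)) with hSdef
  set A : AlgebraicClosure ℚ := ∏ k ∈ Finset.range m, α (k + 1) with hAdef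
  have e1 : ∏ k ∈ Finset.range (p - 1), ((1 : AlgebraicClosure ℚ) - ζ ^ (k + 1))
      = P * ∏ k ∈ Finset.range m, ((1 : AlgebraicClosure ℚ) - ζ ^ (m + k + 1)) := by
    have hpm : p - 1 = m + m := by omega
    rw [hpm, Finset.prod_range_add]
  have e2 : ∏ k ∈ Finset.range m, ((1 : AlgebraicClosure ℚ) - ζ ^ (m + k + 1))
      = ∏ k ∈ Finset.range m, ((1 : AlgebraicClosure ℚ) - ζ ^ (p - (k + 1))) := by
    rw [← Finset.prod_range_reflect (fun k => (1 : AlgebraicClosure ℚ) - ζ ^ (p - (k + 1))) m]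
    apply Finset.prod_congr rfl
    intro k hk
    rw [Finset.mem_range] at hk
    congr 2
    omega
  have e3 : ∀ k ∈ Finset.range m,
      (1 : AlgebraicClosure ℚ) - ζ ^ (p - (k + 1)) = -ζ ^ (p - (k + 1)) * (1 - ζ ^ (k + 1)) := by
    intro k hk
    rw [Finset.mem_range] at hk
    have hz : ζ ^ (p - (k + 1)) * ζ ^ (k + 1) = 1 := by
      rw [← pow_add, show p - (k + 1) + (k + 1) = p by omega, hζp]
    linear_combination -hz
  have e4 : ∏ k ∈ Finset.range m, ((1 : AlgebraicClosure ℚ) - ζ ^ (p - (k + 1)))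
      = (-1) ^ m * ζ ^ S * P := by
    rw [Finset.prod_congr rfl e3, Finset.prod_mul_distrib]
    congr 1
    calc ∏ k ∈ Finset.range m, -ζ ^ (p - (k + 1))
        = ∏ k ∈ Finset.range m, ((-1) * ζ ^ (p - (k + 1))) := by
          exact Finset.prod_congr rfl fun k _ => by ring
      _ = (-1) ^ m * ζ ^ S := by
          rw [Finset.prod_mul_distrib, Finset.prod_const, Finset.card_range,
            Finset.prod_pow_eq_pow_sum]
  have hmain : (p : AlgebraicClosure ℚ) = P ^ 2 * ((-1) ^ m * ζ ^ S) := by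
    rw [← hprod, e1, e2, e4]; ring
  have hPA : P = A ^ p := by
    rw [hAdef, ← Finset.prod_pow]
    apply Finset.prod_congr rfl
    intro k hk
    rw [Finset.mem_range] at hk
    exact (hαp (k + 1) (by omega) (by omega)).symm
  have hA0 : A ≠ 0 := by
    rw [hAdef]
    apply Finset.prod_ne_zero_iff.mpr
    intro k hk
    rw [Finset.mem_range] at hk
    exact hα0 (k + 1) (by omega) (by omega)
  have hP0 : P ≠ 0 := by rw [hPA]; exact pow_ne_zero _ hA0
  set g : AlgebraicClosure ℚ := (-1) ^ m * β / A ^ 2 with hgdef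
  have hgM : g ∈ M := by
    apply div_mem
    · exact mul_mem (pow_mem (neg_mem (one_mem M)) m) hβM
    · apply pow_mem
      rw [hAdef]
      apply prod_mem
      intro k hk
      rw [Finset.mem_range] at hk
      exact hαM (k + 1) (by omega) (by omega)
  have hg : g ^ p = ζ ^ S := by
    have h1 : ((-1 : AlgebraicClosure ℚ) ^ m) ^ p = (-1) ^ m := by
      rw [← pow_mul, mul_comm, pow_mul, Odd.neg_one_pow hodd']
    have h2 : (A ^ 2) ^ p = P ^ 2 := by
      rw [← pow_mul, mul_comm, pow_mul, ← hPA]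
    rw [hgdef, div_pow, mul_pow, h1, hβ, hmain, h2,
      div_eq_iff (pow_ne_zero 2 hP0)]
    have h3 : ((-1 : AlgebraicClosure ℚ) ^ m) ^ 2 = 1 := by
      rw [← pow_mul, mul_comm, pow_mul]; norm_num
    linear_combination P ^ 2 * ζ ^ S * h3
  -- S is not divisible by p
  have hT : (∑ k ∈ Finset.range m, (k + 1)) * 2 = m * (m + 1) := by
    have h := Finset.sum_range_id_mul_two (m + 1)
    have h2 : ∑ i ∈ Finset.range (m + 1), i = ∑ k ∈ Finset.range m, (k + 1) := by
      rw [Finset.sum_range_succ' (fun i => i) m]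
      simp
    rw [← h2, h]
    simp [Nat.mul_comm]
  have hST : S + (∑ k ∈ Finset.range m, (k + 1)) = m * p := by
    rw [hSdef, ← Finset.sum_add_distrib]
    have : ∀ k ∈ Finset.range m, p - (k + 1) + (k + 1) = p := by
      intro k hk
      rw [Finset.mem_range] at hk
      omega
    rw [Finset.sum_congr rfl this, Finset.sum_const, Finset.card_range, smul_eq_mul]
  have hSp : ¬ p ∣ S := by
    intro hdvd
    have hTle : (∑ k ∈ Finset.range m, (k + 1)) = m * p - S := by omega
    have hdT : p ∣ (∑ k ∈ Finset.range m, (k + 1)) := by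
      rw [hTle]
      exact Nat.dvd_sub ⟨m, Nat.mul_comm m p⟩ hdvd
    have hdmm : p ∣ m * (m + 1) := by
      rw [← hT]
      exact Dvd.dvd.mul_right hdT 2
    rcases (Nat.Prime.dvd_mul hp).mp hdmm with h | h
    · have := Nat.le_of_dvd (by omega) h; omega
    · have := Nat.le_of_dvd (by omega) h; omega
  have hS0 : (S : ZMod p) ≠ 0 := by
    rw [Ne, ZMod.natCast_eq_zero_iff]
    exact hSp
  set b : ℕ := ((S : ZMod p)⁻¹).val with hbdef
  have hmod : (S * b : ℕ) ≡ 1 [MOD p] := by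
    have hcast : ((S * b : ℕ) : ZMod p) = ((1 : ℕ) : ZMod p) := by
      push_cast
      rw [hbdef, ZMod.natCast_val, ZMod.cast_id, mul_inv_cancel₀ hS0]
    exact (ZMod.natCast_eq_natCast_iff _ _ _).mp hcast
  obtain ⟨q, hq⟩ : ∃ q, S * b = p * q + 1 := by
    have h1 : (S * b) % p = 1 % p := hmod
    have h2 : 1 % p = 1 := Nat.mod_eq_of_lt hp.one_lt
    have h3 : 1 ≤ S * b := by
      have := Nat.mod_le (S * b) p
      omega
    obtain ⟨q, hq⟩ := (Nat.modEq_iff_dvd' h3).mp hmod.symm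
    exact ⟨q, by omega⟩
  set η : AlgebraicClosure ℚ := g ^ b with hηdef
  have hηp : η ^ p = ζ := by
    calc η ^ p = (g ^ p) ^ b := by rw [hηdef, ← pow_mul, ← pow_mul, mul_comm]
      _ = ζ ^ (S * b) := by rw [hg, ← pow_mul]
      _ = ζ := by rw [hq, pow_add, pow_mul, hζp, one_pow, one_mul, pow_one]
  have hη0 : η ≠ 0 := by
    intro h
    rw [h, zero_pow hp.ne_zero] at hηp
    exact hζ0 hηp.symm
  have hηM : η ∈ M := pow_mem hgM b
  -- now prove the equality
  apply le_antisymm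
  · rw [hL, IntermediateField.adjoin_le_iff]
    intro x hx
    simp only [Set.mem_setOf_eq] at hx
    have h1 : (1 - x ^ p) ^ p = 1 := by linear_combination -hx
    obtain ⟨j, hj, hjx⟩ := hζ.eq_pow_of_pow_eq_one h1
    have hxp : x ^ p = 1 - ζ ^ j := by linear_combination hjx
    show x ∈ M
    rcases Nat.eq_zero_or_pos j with rfl | hj1
    · have hx0 : x = 0 := by
        have hxz : x ^ p = 0 := by rw [hxp]; simp
        exact pow_eq_zero_iff hp.ne_zero |>.mp hxz
      rw [hx0]; exact zero_mem M
    rcases le_or_gt j m with hjm | hjm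
    · exact key M (α j) (hαM j hj1 hjm) (hα0 j hj1 hjm) x
        (by rw [hxp, hαp j hj1 hjm])
    · set i : ℕ := p - j with hi
      have hi1 : 1 ≤ i := by omega
      have hi2 : i ≤ m := by omega
      set y : AlgebraicClosure ℚ := -(η ^ j) * α i with hy
      have hyp : y ^ p = 1 - ζ ^ j := by
        have h4 : (η ^ j) ^ p = ζ ^ j := by
          rw [← pow_mul, Nat.mul_comm, pow_mul, hηp]
        have h2 : (-(η ^ j)) ^ p = -(ζ ^ j) := by
          rw [neg_pow, Odd.neg_one_pow hodd', h4]; ring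
        rw [hy, mul_pow, h2, hαp i hi1 hi2]
        have h3 : ζ ^ j * ζ ^ i = 1 := by
          rw [← pow_add, show j + i = p by omega, hζp]
        linear_combination h3
      have hy0 : y ≠ 0 :=
        mul_ne_zero (neg_ne_zero.mpr (pow_ne_zero _ hη0)) (hα0 i hi1 hi2)
      exact key M y (mul_mem (neg_mem (pow_mem hηM j)) (hαM i hi1 hi2)) hy0 x
        (by rw [hxp, hyp])
  · have hαL : ∀ i : ℕ, 1 ≤ i → i ≤ (p - 1) / 2 → α i ∈ L := by
      intro i hi1 hi2
      rw [hL]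
      apply IntermediateField.subset_adjoin
      show 1 - (1 - (α i) ^ p) ^ p = 0
      rw [hα i hi1 hi2, sub_sub_cancel, ← pow_mul, Nat.mul_comm, pow_mul, hζp,
        one_pow, sub_self]
    have hβL : β ∈ L := by
      have hr : ∀ k : ℕ, ∃ r : AlgebraicClosure ℚ, r ^ p = 1 - ζ ^ (k + 1) := fun k =>
        IsAlgClosed.exists_pow_nat_eq _ hppos
      choose r hr using hr
      have hrL : ∀ k : ℕ, r k ∈ L := by
        intro k
        rw [hL]
        apply IntermediateField.subset_adjoin
        show 1 - (1 - (r k) ^ p) ^ p = 0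
        rw [hr k, sub_sub_cancel, ← pow_mul, mul_comm, pow_mul, hζp,
          one_pow, sub_self]
      set c : AlgebraicClosure ℚ := ∏ k ∈ Finset.range (p - 1), r k with hc
      have hcL : c ∈ L := prod_mem fun k _ => hrL k
      have hcp : c ^ p = (p : AlgebraicClosure ℚ) := by
        rw [hc, ← hprod, ← Finset.prod_pow]
        exact Finset.prod_congr rfl fun k _ => hr k
      have hc0 : c ≠ 0 := by
        intro h
        rw [h, zero_pow hp.ne_zero] at hcp
        exact Nat.cast_ne_zero.mpr hp.ne_zero hcp.symm
      exact key L c hcL hc0 β (by rw [hβ, hcp])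
    rw [hM, IntermediateField.adjoin_le_iff]
    rintro x (⟨i, ⟨hi1, hi2⟩, rfl⟩ | rfl)
    · exact hαL i hi1 hi2
    · exact hβL
end

section
/- Let p be an odd prime, ζ a fixed primitive p-th root of unity in an algebraic closure Q̄ of ℚ, K = ℚ(ζ), and L ⊆ Q̄ the splitting field over K of f_p(x) = 1 − (1 − x^p)^p. Then L = L₃, where L₃ is the field obtained from K by adjoining, for each 1 ≤ i ≤ (p−1)/2, a p-th root of 1 − ζ^i, together with a p-th root of ζ. -/
/-- Let `p` be an odd prime, `ζ` a primitive `p`-th root of unity in `Q̄ = AlgebraicClosure ℚ`,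
`K = ℚ(ζ)`, and `L ⊆ Q̄` the splitting field over `K` of `f_p(x) = 1 - (1 - x^p)^p`.
Then `L = L₃`, where `L₃` is obtained from `K` by adjoining, for each `1 ≤ i ≤ (p-1)/2`,
a `p`-th root `α i` of `1 - ζ^i`, together with a `p`-th root `γ` of `ζ`. -/
theorem stmt_3 (p : ℕ) (hp : p.Prime) (hodd : Odd p)
    (ζ : AlgebraicClosure ℚ) (hζ : IsPrimitiveRoot ζ p)
    (K : IntermediateField ℚ (AlgebraicClosure ℚ))
    (hK : K = IntermediateField.adjoin ℚ {ζ})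
    (L : IntermediateField K (AlgebraicClosure ℚ))
    (hL : L = IntermediateField.adjoin K
      {x : AlgebraicClosure ℚ | 1 - (1 - x ^ p) ^ p = 0})
    (α : ℕ → AlgebraicClosure ℚ)
    (hα : ∀ i : ℕ, 1 ≤ i → i ≤ (p - 1) / 2 → (α i) ^ p = 1 - ζ ^ i)
    (γ : AlgebraicClosure ℚ) (hγ : γ ^ p = ζ) :
    L = IntermediateField.adjoin K
      ((α '' {i : ℕ | 1 ≤ i ∧ i ≤ (p - 1) / 2}) ∪ {γ}) := by
  haveI : NeZero p := ⟨hp.pos.ne'⟩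
  obtain ⟨m, hm⟩ := id hodd
  have hp3 : 3 ≤ p := by
    have := hp.two_le; omega
  have hp0 : 0 < p := hp.pos
  have hζp : ζ ^ p = 1 := hζ.pow_eq_one
  have hζ0 : ζ ≠ 0 := by
    intro h; rw [h, zero_pow hp0.ne'] at hζp; exact zero_ne_one hζp
  have hζK : ζ ∈ K := by
    rw [hK]; exact IntermediateField.mem_adjoin_simple_self ℚ ζ
  have hζmem : ∀ M : IntermediateField K (AlgebraicClosure ℚ), ζ ∈ M := fun M =>
    M.algebraMap_mem ⟨ζ, hζK⟩
  -- ζ^j ≠ 1 for 0 < j < p, so 1 - ζ^j ≠ 0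
  have hne : ∀ j : ℕ, 0 < j → j < p → (1 : AlgebraicClosure ℚ) - ζ ^ j ≠ 0 := by
    intro j hj1 hj2 h
    exact hζ.pow_ne_one_of_pos_of_lt hj1.ne' hj2 (sub_eq_zero.mp h).symm
  -- key lemma: if x^p = y^p, y ∈ M, y ≠ 0, then x ∈ M
  have key : ∀ (M : IntermediateField K (AlgebraicClosure ℚ)) (x y : AlgebraicClosure ℚ),
      y ∈ M → y ≠ 0 → x ^ p = y ^ p → x ∈ M := by
    intro M x y hy hy0 hxy
    have h1 : (x / y) ^ p = 1 := by
      rw [div_pow, hxy, div_self (pow_ne_zero _ hy0)]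
    obtain ⟨k, -, hk⟩ := hζ.eq_pow_of_pow_eq_one h1
    have hx : x = ζ ^ k * y := by
      rw [hk]; field_simp
    rw [hx]
    exact mul_mem (pow_mem (hζmem M) k) hy
  subst hL
  apply le_antisymm
  · -- L ≤ L₃
    rw [IntermediateField.adjoin_le_iff]
    intro x hx
    have hx' : (1 - x ^ p) ^ p = 1 := by
      have := hx; simp only [Set.mem_setOf_eq] at this
      linear_combination -this
    obtain ⟨j, hj, hjx⟩ := hζ.eq_pow_of_pow_eq_one hx'
    have hxp : x ^ p = 1 - ζ ^ j := by linear_combination hjx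
    by_cases hj0 : j = 0
    · subst hj0
      have : x ^ p = 0 := by rw [hxp]; simp
      have hx0 : x = 0 := by
        exact pow_eq_zero_iff hp0.ne' |>.mp this
      rw [hx0]; exact zero_mem _
    · by_cases hjh : j ≤ (p - 1) / 2
      · -- use α j
        have hαj : (α j) ^ p = 1 - ζ ^ j := hα j (by omega) hjh
        have hαmem : α j ∈ IntermediateField.adjoin K
            ((α '' {i : ℕ | 1 ≤ i ∧ i ≤ (p - 1) / 2}) ∪ {γ}) :=
          IntermediateField.subset_adjoin K _ (Or.inl ⟨j, ⟨by omega, hjh⟩, rfl⟩)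
        have hα0 : α j ≠ 0 := by
          intro h
          rw [h, zero_pow hp0.ne'] at hαj
          exact hne j (by omega) hj hαj.symm
        exact key _ x (α j) hαmem hα0 (by rw [hxp, hαj])
      · -- j = p - i with 1 ≤ i ≤ (p-1)/2
        set i := p - j with hi
        have hi1 : 1 ≤ i := by omega
        have hi2 : i ≤ (p - 1) / 2 := by omega
        have hαi : (α i) ^ p = 1 - ζ ^ i := hα i hi1 hi2
        have hγ0 : γ ≠ 0 := by
          intro h; rw [h, zero_pow hp0.ne'] at hγ; exact hζ0 hγ.symm
        have hζi0 : (ζ : AlgebraicClosure ℚ) ^ i ≠ 0 := pow_ne_zero _ hζ0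
        have hij : ζ ^ i * ζ ^ j = 1 := by
          rw [← pow_add]
          have : i + j = p := by omega
          rw [this, hζp]
        have hβ : (-α i / γ ^ i) ^ p = 1 - ζ ^ j := by
          rw [div_pow, ← pow_mul, mul_comm i p, pow_mul, hγ, Odd.neg_pow hodd, hαi]
          rw [div_eq_iff hζi0]
          linear_combination hij
        have hαimem : α i ∈ IntermediateField.adjoin K
            ((α '' {i : ℕ | 1 ≤ i ∧ i ≤ (p - 1) / 2}) ∪ {γ}) :=
          IntermediateField.subset_adjoin K _ (Or.inl ⟨i, ⟨hi1, hi2⟩, rfl⟩)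
        have hγmem : γ ∈ IntermediateField.adjoin K
            ((α '' {i : ℕ | 1 ≤ i ∧ i ≤ (p - 1) / 2}) ∪ {γ}) :=
          IntermediateField.subset_adjoin K _ (Or.inr rfl)
        have hβmem : -α i / γ ^ i ∈ IntermediateField.adjoin K
            ((α '' {i : ℕ | 1 ≤ i ∧ i ≤ (p - 1) / 2}) ∪ {γ}) :=
          div_mem (neg_mem hαimem) (pow_mem hγmem i)
        have hβ0 : -α i / γ ^ i ≠ 0 := by
          intro h
          rw [h, zero_pow hp0.ne'] at hβ
          exact hne j (by omega) hj hβ.symm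
        exact key _ x _ hβmem hβ0 (by rw [hxp, hβ])
  · -- L₃ ≤ L
    rw [IntermediateField.adjoin_le_iff]
    set S : Set (AlgebraicClosure ℚ) := {x : AlgebraicClosure ℚ | 1 - (1 - x ^ p) ^ p = 0}
      with hS
    have hroot : ∀ y : AlgebraicClosure ℚ, ∀ j : ℕ, y ^ p = 1 - ζ ^ j → y ∈ S := by
      intro y j hy
      simp only [hS, Set.mem_setOf_eq, hy]
      have : (1 : AlgebraicClosure ℚ) - (1 - ζ ^ j) = ζ ^ j := by ring
      rw [this, ← pow_mul, mul_comm j p, pow_mul, hζp, one_pow, sub_self]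
    rintro x (⟨i, ⟨hi1, hi2⟩, rfl⟩ | hx)
    · -- α i ∈ L
      exact IntermediateField.subset_adjoin K _ (hroot (α i) i (hα i hi1 hi2))
    · -- γ ∈ L
      obtain rfl : x = γ := hx
      obtain ⟨σ, hσ⟩ := IsAlgClosed.exists_pow_nat_eq (1 - ζ) hp0
      obtain ⟨ρ, hρ⟩ := IsAlgClosed.exists_pow_nat_eq (1 - ζ ^ (p - 1)) hp0
      have hσmem : σ ∈ IntermediateField.adjoin K S :=
        IntermediateField.subset_adjoin K _ (hroot σ 1 (by rwa [pow_one]))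
      have hρmem : ρ ∈ IntermediateField.adjoin K S :=
        IntermediateField.subset_adjoin K _ (hroot ρ (p - 1) hρ)
      have hρ0 : ρ ≠ 0 := by
        intro h
        rw [h, zero_pow hp0.ne'] at hρ
        exact hne (p - 1) (by omega) (by omega) hρ.symm
      have hσ0 : σ ≠ 0 := by
        intro h
        rw [h, zero_pow hp0.ne'] at hσ
        exact hne 1 one_pos (by omega) (by rw [pow_one]; exact hσ.symm)
      have hρp0 : (1 : AlgebraicClosure ℚ) - ζ ^ (p - 1) ≠ 0 :=
        hne (p - 1) (by omega) (by omega)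
      have hζp1 : ζ * ζ ^ (p - 1) = 1 := by
        rw [← pow_succ']
        have : p - 1 + 1 = p := by omega
        rw [this, hζp]
      have hγeq : x ^ p = (-σ / ρ) ^ p := by
        rw [div_pow, Odd.neg_pow hodd, hσ, hρ, hγ, eq_div_iff hρp0]
        linear_combination -hζp1
      exact key _ x (-σ / ρ) (div_mem (neg_mem hσmem) hρmem) (by
        simp only [ne_eq, div_eq_zero_iff, neg_eq_zero, not_or]
        exact ⟨hσ0, hρ0⟩) hγeq
end

section
/- Let p be an odd prime and ζ a primitive p-th root of unity. Set b = ∏_{i=1}^{(p−1)/2} (1 − ζ^i). Then b² = (−1)^{(p−1)/2} · ζ^{(p−1)(p+1)/8} · p, where the exponent (p−1)(p+1)/8 = (p²−1)/8 is an integer. -/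
open Finset Polynomial

/-- The product of `1 - ζ^i` over `1 ≤ i ≤ n-1` equals `n`. -/
lemma aux_prod_one_sub {K : Type*} [Field K] {n : ℕ} (hn : 0 < n) {ζ : K}
    (hζ : IsPrimitiveRoot ζ n) :
    ∏ i ∈ Finset.Icc 1 (n - 1), (1 - ζ ^ i) = (n : K) := by
  classical
  have hinj : Set.InjOn (ζ ^ ·) (Finset.range n) := fun i hi j hj hij =>
    hζ.pow_inj (Finset.mem_range.1 hi) (Finset.mem_range.1 hj) hij
  have himg : (Finset.range n).image (ζ ^ ·) = Polynomial.nthRootsFinset n (1 : K) := by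
    apply Finset.eq_of_subset_of_card_le
    · intro x hx
      simp only [Finset.mem_image, Finset.mem_range] at hx
      obtain ⟨i, _, rfl⟩ := hx
      exact (Polynomial.mem_nthRootsFinset hn (1 : K)).2 (by
        rw [← pow_mul, mul_comm, pow_mul, hζ.pow_eq_one, one_pow])
    · rw [hζ.card_nthRootsFinset, Finset.card_image_of_injOn hinj, Finset.card_range]
  have h2 : (X : K[X]) ^ n - 1 = ∏ i ∈ Finset.range n, (X - C (ζ ^ i)) := by
    rw [Polynomial.X_pow_sub_one_eq_prod hn hζ, ← himg, Finset.prod_image hinj]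
  have hIccIco : Finset.Icc 1 (n - 1) = Finset.Ico 1 n := by
    rw [← Finset.Ico_add_one_right_eq_Icc]
    congr 1
    omega
  have hsplit : (Finset.range n).prod (fun i => (X : K[X]) - C (ζ ^ i)) =
      ((X : K[X]) - 1) * ∏ i ∈ Finset.Icc 1 (n - 1), (X - C (ζ ^ i)) := by
    rw [Finset.range_eq_Ico, Finset.prod_eq_prod_Ico_succ_bot hn, hIccIco]
    simp
  have hgeom : ((X : K[X]) - 1) * ∑ i ∈ Finset.range n, X ^ i =
      ((X : K[X]) - 1) * ∏ i ∈ Finset.Icc 1 (n - 1), (X - C (ζ ^ i)) := by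
    rw [← hsplit, ← h2, mul_comm, geom_sum_mul]
  have hX1 : (X : K[X]) - 1 ≠ 0 := by
    have := Polynomial.X_sub_C_ne_zero (1 : K)
    simpa using this
  have hQ : (∑ i ∈ Finset.range n, (X : K[X]) ^ i) =
      ∏ i ∈ Finset.Icc 1 (n - 1), (X - C (ζ ^ i)) :=
    mul_left_cancel₀ hX1 hgeom
  have := congrArg (Polynomial.eval 1) hQ
  simpa [Polynomial.eval_prod, Polynomial.eval_finset_sum] using this.symm

/-- Let `p` be an odd prime and `ζ` a primitive `p`-th root of unity (in `AlgebraicClosure ℚ`).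
Set `b = ∏_{i=1}^{(p-1)/2} (1 - ζ^i)`.  Then the exponent `(p-1)(p+1)/8 = (p²-1)/8` is an
integer, and `b² = (-1)^((p-1)/2) · ζ^((p²-1)/8) · p`. -/
theorem stmt_4 (p : ℕ) (hp : p.Prime) (hodd : Odd p)
    (ζ : AlgebraicClosure ℚ) (hζ : IsPrimitiveRoot ζ p) :
    8 ∣ p ^ 2 - 1 ∧
    (∏ i ∈ Finset.Icc 1 ((p - 1) / 2), (1 - ζ ^ i)) ^ 2 =
      (-1) ^ ((p - 1) / 2) * ζ ^ ((p ^ 2 - 1) / 8) * (p : AlgebraicClosure ℚ) := by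
  obtain ⟨m, hm⟩ := hodd
  have hp2 : 2 ≤ p := hp.two_le
  have hm' : (p - 1) / 2 = m := by omega
  set T := ∑ j ∈ Finset.Icc 1 m, j with hTdef
  -- Gauss sum
  have h0 : ∑ j ∈ Finset.range (m + 1), j = T := by
    rw [hTdef, ← Finset.Ico_add_one_right_eq_Icc, Finset.range_eq_Ico,
      Finset.sum_eq_sum_Ico_succ_bot (Nat.succ_pos m)]
    simp
  have hT : T * 2 = (m + 1) * m := by
    rw [← h0, Finset.sum_range_id_mul_two]
    congr 1
  have hpsq : p ^ 2 = 8 * T + 1 := by nlinarith [hT, hm]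
  have hpT : p ^ 2 - 1 = 8 * T := by omega
  have hE : (p ^ 2 - 1) / 8 = T := by omega
  refine ⟨⟨T, hpT⟩, ?_⟩
  rw [hm', hE]
  set b := ∏ i ∈ Finset.Icc 1 m, (1 - ζ ^ i) with hb
  have hkey : ∏ i ∈ Finset.Icc 1 (p - 1), (1 - ζ ^ i) = (p : AlgebraicClosure ℚ) :=
    aux_prod_one_sub hp.pos hζ
  have hsplit : ∏ i ∈ Finset.Icc 1 (p - 1), (1 - ζ ^ i) =
      b * ∏ i ∈ Finset.Icc (m + 1) (p - 1), (1 - ζ ^ i) := by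
    rw [hb, ← Finset.Ico_add_one_right_eq_Icc, ← Finset.Ico_add_one_right_eq_Icc, ← Finset.Ico_add_one_right_eq_Icc,
      ← Finset.prod_Ico_consecutive _ (by omega : 1 ≤ m + 1) (by omega : m + 1 ≤ p - 1 + 1)]
  have hre : ∏ i ∈ Finset.Icc (m + 1) (p - 1), (1 - ζ ^ i) =
      ∏ j ∈ Finset.Icc 1 m, (1 - ζ ^ (p - j)) := by
    apply Finset.prod_nbij' (fun i => p - i) (fun j => p - j)
    · intro i hi; simp only [Finset.mem_Icc] at hi ⊢; omega
    · intro j hj; simp only [Finset.mem_Icc] at hj ⊢; omega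
    · intro i hi; simp only [Finset.mem_Icc] at hi; omega
    · intro j hj; simp only [Finset.mem_Icc] at hj; omega
    · intro i hi; simp only [Finset.mem_Icc] at hi
      congr 2
      omega
  have hfac : ∀ j ∈ Finset.Icc 1 m, (1 : AlgebraicClosure ℚ) - ζ ^ (p - j) =
      (-ζ ^ (p - j)) * (1 - ζ ^ j) := by
    intro j hj
    simp only [Finset.mem_Icc] at hj
    have hjp : p - j + j = p := by omega
    have hz : ζ ^ (p - j) * ζ ^ j = 1 := by rw [← pow_add, hjp, hζ.pow_eq_one]
    linear_combination -hz
  have hre2 : ∏ j ∈ Finset.Icc 1 m, (1 - ζ ^ (p - j)) =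
      (∏ j ∈ Finset.Icc 1 m, (-ζ ^ (p - j))) * b := by
    rw [hb, ← Finset.prod_mul_distrib]
    exact Finset.prod_congr rfl hfac
  have hcard : (Finset.Icc 1 m).card = m := by simp
  set S := ∑ j ∈ Finset.Icc 1 m, (p - j) with hS
  have hmon : ∏ j ∈ Finset.Icc 1 m, (-ζ ^ (p - j)) =
      (-1 : AlgebraicClosure ℚ) ^ m * ζ ^ S := by
    calc ∏ j ∈ Finset.Icc 1 m, (-ζ ^ (p - j))
        = ∏ j ∈ Finset.Icc 1 m, ((-1) * ζ ^ (p - j)) :=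
          Finset.prod_congr rfl (fun j _ => by ring)
      _ = (∏ _j ∈ Finset.Icc 1 m, (-1 : AlgebraicClosure ℚ)) *
            ∏ j ∈ Finset.Icc 1 m, ζ ^ (p - j) := Finset.prod_mul_distrib
      _ = (-1) ^ m * ζ ^ S := by
          rw [Finset.prod_const, hcard, Finset.prod_pow_eq_pow_sum]
  have hST : S + T = m * p := by
    rw [hS, hTdef, ← Finset.sum_add_distrib]
    rw [Finset.sum_congr rfl (fun j hj => by
      simp only [Finset.mem_Icc] at hj
      omega : ∀ j ∈ Finset.Icc 1 m, p - j + j = p)]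
    simp [mul_comm]
  have hzST : ζ ^ S * ζ ^ T = 1 := by
    rw [← pow_add, hST, mul_comm m p, pow_mul, hζ.pow_eq_one, one_pow]
  have hp_eq : (p : AlgebraicClosure ℚ) = b * ((-1) ^ m * ζ ^ S * b) := by
    rw [← hkey, hsplit, hre, hre2, hmon]
  calc b ^ 2 = b ^ 2 * (ζ ^ S * ζ ^ T) * ((-1 : AlgebraicClosure ℚ) ^ m * (-1) ^ m) := by
        rw [hzST, ← pow_add, Even.neg_one_pow ⟨m, by ring⟩]; ring
    _ = (-1) ^ m * ζ ^ T * (b * ((-1) ^ m * ζ ^ S * b)) := by ring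
    _ = (-1) ^ m * ζ ^ T * (p : AlgebraicClosure ℚ) := by rw [← hp_eq]
end

section
/- Let Λ₁ = 𝔽₃[e, f]/(e³ − 1, f³ − 1) and B_σ = 1 − (e + f)(1 − e)(1 − f) ∈ Λ₁. Then the annihilator of 1 − B_σ in Λ₁, i.e., {m ∈ Λ₁ : B_σ·m = m}, equals the ideal of Λ₁ generated by 1 + e + e² and 1 + f + f². -/
/-- `Λ₁ = 𝔽₃[e,f]/(e³-1, f³-1)`: the group ring of `(ℤ/3)²` over `𝔽₃ = ZMod 3`. -/
noncomputable abbrev Lam3 : Type := AddMonoidAlgebra (ZMod 3) (ZMod 3 × ZMod 3)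

/-- The group-like generator `e`. -/
noncomputable def eGen : Lam3 := AddMonoidAlgebra.single ((1 : ZMod 3), (0 : ZMod 3)) 1

/-- The group-like generator `f`. -/
noncomputable def fGen : Lam3 := AddMonoidAlgebra.single ((0 : ZMod 3), (1 : ZMod 3)) 1

/-- `B_σ = 1 - (e + f)(1 - e)(1 - f)`. -/
noncomputable def Bsig : Lam3 := 1 - (eGen + fGen) * (1 - eGen) * (1 - fGen)

/-- `B_τ = 1 + (e + f) - (e² + ef + f²) + e²f²`. -/
noncomputable def Btau : Lam3 :=
  1 + (eGen + fGen) - (eGen ^ 2 + eGen * fGen + fGen ^ 2) + eGen ^ 2 * fGen ^ 2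

lemma lam3_add_apply (a b : Lam3) (g : ZMod 3 × ZMod 3) : (a + b).coeff g = a.coeff g + b.coeff g :=
  Finsupp.add_apply a.coeff b.coeff g

lemma lam3_sub_apply (a b : Lam3) (g : ZMod 3 × ZMod 3) : (a - b).coeff g = a.coeff g - b.coeff g :=
  Finsupp.sub_apply a.coeff b.coeff g

lemma lam3_zero_apply (g : ZMod 3 × ZMod 3) : (0 : Lam3).coeff g = 0 := rfl

lemma lam3_h3 : (3 : Lam3) = 0 := by
  rw [← map_ofNat (algebraMap (ZMod 3) Lam3) 3, show (3:ZMod 3) = 0 by decide, map_zero]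

lemma lam3_he : eGen ^ 3 = 1 := by
  unfold eGen
  rw [AddMonoidAlgebra.single_pow, show (3 • (((1:ZMod 3),(0:ZMod 3)))) = 0 by decide,
    show (1:ZMod 3)^3 = 1 by decide, ← AddMonoidAlgebra.one_def]

lemma lam3_hf : fGen ^ 3 = 1 := by
  unfold fGen
  rw [AddMonoidAlgebra.single_pow, show (3 • (((0:ZMod 3),(1:ZMod 3)))) = 0 by decide,
    show (1:ZMod 3)^3 = 1 by decide, ← AddMonoidAlgebra.one_def]

lemma lam3_he2 : eGen ^ 2 = AddMonoidAlgebra.single ((2:ZMod 3),(0:ZMod 3)) 1 := by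
  unfold eGen
  rw [AddMonoidAlgebra.single_pow, show (2 • (((1:ZMod 3),(0:ZMod 3)))) = ((2:ZMod 3),(0:ZMod 3)) by decide,
    show (1:ZMod 3)^2 = 1 by decide]

lemma lam3_hf2 : fGen ^ 2 = AddMonoidAlgebra.single ((0:ZMod 3),(2:ZMod 3)) 1 := by
  unfold fGen
  rw [AddMonoidAlgebra.single_pow, show (2 • (((0:ZMod 3),(1:ZMod 3)))) = ((0:ZMod 3),(2:ZMod 3)) by decide,
    show (1:ZMod 3)^2 = 1 by decide]

lemma lam3_hef : eGen * fGen = AddMonoidAlgebra.single ((1:ZMod 3),(1:ZMod 3)) 1 := by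
  unfold eGen fGen
  rw [AddMonoidAlgebra.single_mul_single,
    show ((1:ZMod 3),(0:ZMod 3)) + ((0:ZMod 3),(1:ZMod 3)) = ((1:ZMod 3),(1:ZMod 3)) by decide, one_mul]

lemma lam3_cases : ∀ a : ZMod 3 × ZMod 3, a = (0,0) ∨ a = (0,1) ∨ a = (0,2) ∨ a = (1,0) ∨
    a = (1,1) ∨ a = (1,2) ∨ a = (2,0) ∨ a = (2,1) ∨ a = (2,2) := by decide

/-- The annihilator of `1 - B_σ` in `Λ₁ = 𝔽₃[e,f]/(e³-1, f³-1)`, i.e.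
`{m : B_σ · m = m}`, equals the ideal generated by `1 + e + e²` and `1 + f + f²`. -/
theorem stmt_15 :
    ∀ m : Lam3, Bsig * m = m ↔ m ∈ Ideal.span {1 + eGen + eGen ^ 2, 1 + fGen + fGen ^ 2} := by
  intro m
  constructor
  · intro h
    unfold Bsig at h
    have hg : (eGen + fGen) * ((1 - eGen) * ((1 - fGen) * m)) = 0 := by linear_combination -h
    have hxy : (1 - eGen) * ((1 - fGen) * m) = 0 := by
      linear_combination (-(eGen+fGen)^2) * hg + ((1-eGen)*((1-fGen)*m)) * lam3_he
        + ((1-eGen)*((1-fGen)*m)) * lam3_hf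
        + ((1 + eGen^2*fGen + eGen*fGen^2) * ((1-eGen)*((1-fGen)*m))) * lam3_h3
    have hxy' : m - eGen * m - fGen * m
        + AddMonoidAlgebra.single ((1:ZMod 3),(1:ZMod 3)) 1 * m = 0 := by
      linear_combination hxy - m * lam3_hef
    unfold eGen fGen at hxy'
    have r00 := Finsupp.ext_iff.mp (congrArg AddMonoidAlgebra.coeff hxy') ((0:ZMod 3),(0:ZMod 3))
    have r01 := Finsupp.ext_iff.mp (congrArg AddMonoidAlgebra.coeff hxy') ((0:ZMod 3),(1:ZMod 3))
    have r10 := Finsupp.ext_iff.mp (congrArg AddMonoidAlgebra.coeff hxy') ((1:ZMod 3),(0:ZMod 3))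
    have r11 := Finsupp.ext_iff.mp (congrArg AddMonoidAlgebra.coeff hxy') ((1:ZMod 3),(1:ZMod 3))
    simp only [lam3_add_apply, lam3_sub_apply, lam3_zero_apply,
      AddMonoidAlgebra.coeff_single_mul_apply, one_mul, Prod.neg_mk, Prod.mk_add_mk,
      neg_zero, add_zero, zero_add, show (-1:ZMod 3) = 2 by decide,
      show (2:ZMod 3)+1 = 0 by decide, show (2:ZMod 3)+2 = 1 by decide] at r00 r01 r10 r11
    rw [Ideal.mem_span_pair]
    refine ⟨AddMonoidAlgebra.single 0 (m.coeff (2,0) + 2 * m.coeff (2,2)) +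
        AddMonoidAlgebra.single ((0:ZMod 3),(1:ZMod 3)) (m.coeff (2,1) - m.coeff (2,2)),
        AddMonoidAlgebra.single 0 (m.coeff (0,2)) +
        AddMonoidAlgebra.single ((1:ZMod 3),(0:ZMod 3)) (m.coeff (1,2)) +
        AddMonoidAlgebra.single ((2:ZMod 3),(0:ZMod 3)) (m.coeff (2,2)), ?_⟩
    rw [lam3_he2, lam3_hf2, AddMonoidAlgebra.one_def]
    unfold eGen fGen
    have hz3 : (3 : ZMod 3) = 0 := by decide
    refine AddMonoidAlgebra.ext (Finsupp.ext fun a => ?_)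
    rcases lam3_cases a with rfl|rfl|rfl|rfl|rfl|rfl|rfl|rfl|rfl <;>
      simp only [mul_add, add_mul, AddMonoidAlgebra.single_mul_single, mul_one, one_mul,
        zero_add, add_zero, Prod.mk_add_mk, lam3_add_apply, AddMonoidAlgebra.coeff_single_apply,
        ← Prod.mk_zero_zero] <;>
      simp (config := { decide := true }) only [Prod.mk.injEq, if_true, if_false,
        reduceIte, and_self, and_false, false_and, zero_add, add_zero]
    · linear_combination -r00 + m.coeff (2,2) * hz3
    · linear_combination -r00 - r01
    · linear_combination -r00 - r10 + m.coeff (2,2) * hz3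
    · linear_combination -r00 - r01 - r10 - r11
    · linear_combination m.coeff (2,2) * hz3
    · ring
  · intro hm
    rw [Ideal.mem_span_pair] at hm
    obtain ⟨p, q, rfl⟩ := hm
    unfold Bsig
    linear_combination ((eGen+fGen)*(1-fGen)*p) * lam3_he + ((eGen+fGen)*(1-eGen)*q) * lam3_hf
end
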